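/- Let n ≥ 2 be an integer, let b be a nonzero algebraic integer, and let w be a periodic point of g_b of period h ≥ 1 whose multiplier μ = ∏_{j=0}^{h-1} (g_b^{∘j}(w))^{n-1} is a root of unity. Then n^h − μ lies in the ideal b·𝒪, where 𝒪 is the ring of all algebraic integers; that is, (n^h − μ)/b is an algebraic integer. -/

import Mathlib

set_option synthInstance.maxHeartbeats 1000000
set_option maxHeartbeats 1000000
open Polynomial

lemma periodic_integral (n : ℕ) (hn : 2 ≤ n) (b : ℂ) (hb : IsIntegral ℤ b)
    (g : ℂ → ℂ) (hg : g = fun z : ℂ => (z ^ n + b) / n)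
    (h : ℕ) (hh : 1 ≤ h) (v : ℂ) (hper : g^[h] v = v) : IsIntegral ℤ v := by
  have hn0 : (n : ℂ) ≠ 0 := Nat.cast_ne_zero.mpr (by omega)
  have hnint : IsIntegral ℤ (n : ℂ) := by
    have := isIntegral_algebraMap (R := ℤ) (A := ℂ) (x := (n : ℤ))
    simpa using this
  have key : ∀ j : ℕ, ∃ (p : (integralClosure ℤ ℂ)[X]) (N : ℕ), p.Monic ∧ p.natDegree = n ^ j ∧
      Polynomial.aeval v p = (n : ℂ) ^ N * g^[j] v := by
    intro j
    induction j with
    | zero => exact ⟨X, 0, monic_X, by simp, by simp⟩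
    | succ j ih =>
      obtain ⟨p, N, hmon, hdeg, heval⟩ := ih
      have hbel : ((n : ℂ) ^ (N * n) * b) ∈ integralClosure ℤ ℂ := by
        rw [mem_integralClosure_iff]
        exact (hnint.pow (N * n)).mul hb
      refine ⟨p ^ n + C ⟨_, hbel⟩, N * n + 1, ?_, ?_, ?_⟩
      · apply (hmon.pow n).add_of_left
        calc degree (C (⟨_, hbel⟩ : integralClosure ℤ ℂ)) ≤ 0 := degree_C_le
        _ < degree (p ^ n) := by
            rw [degree_eq_natDegree (hmon.pow n).ne_zero, hmon.natDegree_pow, hdeg]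
            exact_mod_cast Nat.pos_of_ne_zero (by positivity)
      · rw [natDegree_add_C, hmon.natDegree_pow, hdeg, pow_succ']
      · have hstep : g^[j + 1] v = ((g^[j] v) ^ n + b) / n := by
          rw [Function.iterate_succ_apply', hg]
        simp only [map_add, map_pow, aeval_C, heval]
        have hcoe : (algebraMap (integralClosure ℤ ℂ) ℂ)
            (⟨_, hbel⟩ : integralClosure ℤ ℂ) = (n : ℂ) ^ (N * n) * b := rfl
        rw [hcoe, hstep]
        field_simp
        ring
  obtain ⟨p, N, hmon, hdeg, heval⟩ := key h
  rw [hper] at heval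
  have hNel : ((n : ℂ) ^ N) ∈ integralClosure ℤ ℂ := by
    rw [mem_integralClosure_iff]
    exact hnint.pow N
  set q : (integralClosure ℤ ℂ)[X] := p - C ⟨_, hNel⟩ * X with hq
  have hqmon : q.Monic := by
    apply hmon.sub_of_left
    calc degree (C (⟨_, hNel⟩ : integralClosure ℤ ℂ) * X) ≤ 1 := degree_C_mul_X_le _
    _ < (n ^ h : ℕ) := by
        rw [Nat.one_lt_cast]
        calc 1 < n := hn
        _ ≤ n ^ h := Nat.le_self_pow (by omega) n
    _ = degree p := by rw [degree_eq_natDegree hmon.ne_zero, hdeg]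
  have hqeval : Polynomial.aeval v q = 0 := by
    rw [hq]
    simp only [map_sub, map_mul, aeval_C, aeval_X, heval]
    have hcoe : (algebraMap (integralClosure ℤ ℂ) ℂ)
        (⟨_, hNel⟩ : integralClosure ℤ ℂ) = (n : ℂ) ^ N := rfl
    rw [hcoe]
    ring
  have : IsIntegral (integralClosure ℤ ℂ) v := ⟨q, hqmon, hqeval⟩
  exact isIntegral_trans v this

theorem stmt7 (n : ℕ) (hn : 2 ≤ n) (b : ℂ) (hb0 : b ≠ 0) (hb : IsIntegral ℤ b)
    (g : ℂ → ℂ) (hg : g = fun z : ℂ => (z ^ n + b) / n)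
    (w : ℂ) (h : ℕ) (hh : 1 ≤ h) (hper : g^[h] w = w)
    (μ : ℂ) (hμ : μ = ∏ j ∈ Finset.range h, (g^[j] w) ^ (n - 1))
    (hroot : ∃ m : ℕ, 1 ≤ m ∧ μ ^ m = 1) :
    IsIntegral ℤ (((n : ℂ) ^ h - μ) / b) := by
  obtain ⟨m, hm, hμm⟩ := hroot
  have hn0 : (n : ℂ) ≠ 0 := Nat.cast_ne_zero.mpr (by omega)
  -- all iterates are integral
  have hint : ∀ j, IsIntegral ℤ (g^[j] w) := by
    intro j
    refine periodic_integral n hn b hb g hg h hh _ ?_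
    rw [← Function.iterate_add_apply, Nat.add_comm, Function.iterate_add_apply, hper]
  set P : ℂ := ∏ j ∈ Finset.range h, g^[j] w with hP
  have hPint : IsIntegral ℤ P := IsIntegral.prod _ fun j _ => hint j
  have hμP : μ = P ^ (n - 1) := by rw [hμ, hP, Finset.prod_pow]
  have hPu : P ^ ((n - 1) * m) = 1 := by rw [pow_mul, ← hμP, hμm]
  have hPne : P ≠ 0 := by
    intro h0
    rw [h0, zero_pow (Nat.mul_ne_zero (by omega) (by omega))] at hPu
    exact zero_ne_one hPu
  -- the basic relation
  have hrel : ∀ j, (g^[j] w) ^ n = (n : ℂ) * g^[j+1] w - b := by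
    intro j
    rw [Function.iterate_succ_apply', hg]
    field_simp
    ring
  -- shift identity
  have hshift : (∏ j ∈ Finset.range h, ((n : ℂ) * g^[j+1] w - b))
      = ∏ j ∈ Finset.range h, ((n : ℂ) * g^[j] w - b) := by
    have h1 := Finset.prod_range_succ' (fun j => (n : ℂ) * g^[j] w - b) h
    have h2 := Finset.prod_range_succ (fun j => (n : ℂ) * g^[j] w - b) h
    rw [h1, hper] at h2
    simp only [Function.iterate_zero_apply] at h2 ⊢
    have hne : (n : ℂ) * w - b ≠ 0 := by
      have := hrel (h - 1)
      have hj : h - 1 + 1 = h := by omega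
      rw [hj, hper] at this
      rw [← this]
      exact pow_ne_zero n (Finset.prod_ne_zero_iff.mp hPne (h-1) (Finset.mem_range.mpr (by omega)))
    exact mul_right_cancel₀ hne h2
  have hkey : μ * P = ∏ j ∈ Finset.range h, ((n : ℂ) * g^[j] w - b) := by
    rw [hμ, hP, ← Finset.prod_mul_distrib, ← hshift]
    refine Finset.prod_congr rfl fun j _ => ?_
    rw [← hrel j, ← pow_succ]
    congr 1
    omega
  -- expansion mod b
  have hexp : ∀ k : ℕ, ∃ T : ℂ, IsIntegral ℤ T ∧
      (∏ j ∈ Finset.range k, ((n : ℂ) * g^[j] w - b))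
        = (n : ℂ) ^ k * (∏ j ∈ Finset.range k, g^[j] w) + b * T := by
    intro k
    induction k with
    | zero => exact ⟨0, isIntegral_zero, by simp⟩
    | succ k ih =>
      obtain ⟨T, hT, hTe⟩ := ih
      have hnint : IsIntegral ℤ (n : ℂ) := by
        have := isIntegral_algebraMap (R := ℤ) (A := ℂ) (x := (n : ℤ))
        simpa using this
      have hPk : IsIntegral ℤ (∏ j ∈ Finset.range k, g^[j] w) :=
        IsIntegral.prod _ fun j _ => hint j
      refine ⟨(n : ℂ) * T * g^[k] w - (n : ℂ) ^ k * (∏ j ∈ Finset.range k, g^[j] w) - b * T,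
        ((hnint.mul hT).mul (hint k)).sub ((hnint.pow k).mul hPk) |>.sub (hb.mul hT), ?_⟩
      rw [Finset.prod_range_succ, Finset.prod_range_succ, hTe]
      ring
  obtain ⟨T, hT, hTe⟩ := hexp h
  -- conclude
  have hmain : (n : ℂ) ^ h - μ = -(b * T) * P ^ ((n - 1) * m - 1) := by
    have h1 : ((n : ℂ) ^ h - μ) * P = -(b * T) := by
      rw [← hkey] at hTe
      linear_combination -hTe
    calc (n : ℂ) ^ h - μ = ((n : ℂ) ^ h - μ) * P ^ ((n - 1) * m) := by rw [hPu, mul_one]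
    _ = (((n : ℂ) ^ h - μ) * P) * P ^ ((n - 1) * m - 1) := by
        rw [mul_assoc, ← pow_succ']
        congr 2
        have : 0 < (n - 1) * m := Nat.mul_pos (by omega) (by omega)
        omega
    _ = -(b * T) * P ^ ((n - 1) * m - 1) := by rw [h1]
  have : ((n : ℂ) ^ h - μ) / b = -T * P ^ ((n - 1) * m - 1) := by
    rw [div_eq_iff hb0, hmain]
    ring
  rw [this]
  exact (hT.neg).mul (hPint.pow _)
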